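/- Let Z, X ≥ 0 be random variables and 0 < p < q. Suppose for every λ > 0: P(Z > λ) ≤ P(X > λ^q) + (C/λ^q)·E[min{λ^q, X}] for a constant C > 0. Then E[Z^p] ≤ (1 + C·q/(q-p)) · E[X^{p/q}]. -/

import Mathlib

open MeasureTheory Real Set
open intervalIntegral
open scoped ENNReal

lemma layercake_rpow' {Ω : Type*} [MeasurableSpace Ω] (μ : Measure Ω)
    (f : Ω → ℝ) (hf : Measurable f) (hf0 : ∀ ω, 0 ≤ f ω) {p : ℝ} (hp : 0 < p) :
    ∫⁻ ω, ENNReal.ofReal (f ω ^ p) ∂μ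
      = ∫⁻ t in Ioi (0:ℝ), μ {ω | t < f ω} * ENNReal.ofReal (p * t ^ (p - 1)) := by
  have hint : ∀ t > (0:ℝ), IntervalIntegrable (fun t : ℝ => p * t ^ (p - 1)) volume 0 t :=
    fun t _ => (intervalIntegrable_rpow' (by linarith)).const_mul p
  have hnn : ∀ᵐ t ∂(volume.restrict (Ioi (0:ℝ))), 0 ≤ p * t ^ (p - 1) := by
    rw [ae_restrict_iff' measurableSet_Ioi]
    exact ae_of_all _ fun t ht => by
      have : (0:ℝ) < t := ht
      positivity
  have key := lintegral_comp_eq_lintegral_meas_lt_mul μ (ae_of_all _ hf0)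
    hf.aemeasurable hint hnn
  rw [← key]
  apply lintegral_congr fun ω => ?_
  congr 1
  have h1 : p - 1 + 1 = p := by ring
  rw [intervalIntegral.integral_const_mul,
    integral_rpow (Or.inl (by linarith : (-1:ℝ) < p - 1)), h1,
    Real.zero_rpow hp.ne', sub_zero]
  field_simp


lemma inner_int {p q : ℝ} (hp : 0 < p) (hpq : p < q) {x : ℝ} (hx : 0 ≤ x) :
    ∫⁻ t in Ioi (0:ℝ), ENNReal.ofReal (t ^ (p - 1 - q)) *
        min (ENNReal.ofReal (t ^ q)) (ENNReal.ofReal x)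
      = ENNReal.ofReal (x ^ (p / q) * (q / (p * (q - p)))) := by
  have hq : 0 < q := hp.trans hpq
  rcases hx.eq_or_lt with hx0 | hx'
  · rw [← hx0, Real.zero_rpow (by positivity : p / q ≠ 0)]
    simp only [ENNReal.ofReal_zero, zero_mul]
    rw [lintegral_eq_zero_iff]
    · exact ae_of_all _ fun t => by simp
    · exact ((measurable_id.pow measurable_const).ennreal_ofReal).mul
        (((measurable_id.pow measurable_const).ennreal_ofReal).min measurable_const)
  set a : ℝ := x ^ (1/q) with ha_def
  have ha : 0 < a := rpow_pos_of_pos hx' _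
  have haq : a ^ q = x := by
    rw [ha_def, ← Real.rpow_mul hx, one_div_mul_cancel hq.ne', Real.rpow_one]
  have hap : a ^ p = x ^ (p/q) := by
    rw [ha_def, ← Real.rpow_mul hx]; congr 1; ring
  rw [← Ioc_union_Ioi_eq_Ioi ha.le,
    lintegral_union measurableSet_Ioi (Set.Ioc_disjoint_Ioi le_rfl)]
  have e1 : ∫⁻ t in Ioc (0:ℝ) a, ENNReal.ofReal (t ^ (p - 1 - q)) *
      min (ENNReal.ofReal (t ^ q)) (ENNReal.ofReal x)
      = ENNReal.ofReal (x ^ (p/q) / p) := by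
    rw [setLIntegral_congr_fun_ae measurableSet_Ioc
      (ae_of_all _ (fun t ht => ?_) :
        ∀ᵐ t ∂volume, t ∈ Ioc (0:ℝ) a →
          ENNReal.ofReal (t ^ (p - 1 - q)) *
            min (ENNReal.ofReal (t ^ q)) (ENNReal.ofReal x)
          = ENNReal.ofReal (t ^ (p - 1)))]
    · rw [← ofReal_integral_eq_lintegral_ofReal
        ((intervalIntegrable_rpow' (by linarith : (-1:ℝ) < p - 1)).1)
        ((ae_restrict_iff' measurableSet_Ioc).2 (ae_of_all _
          fun t ht => Real.rpow_nonneg ht.1.le _))]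
      congr 1
      rw [← intervalIntegral.integral_of_le ha.le,
        integral_rpow (Or.inl (by linarith : (-1:ℝ) < p - 1))]
      have h1 : p - 1 + 1 = p := by ring
      rw [h1, Real.zero_rpow hp.ne', sub_zero, hap]
    · have h2 : t ^ q ≤ x := by
        rw [← haq]; exact Real.rpow_le_rpow ht.1.le ht.2 hq.le
      rw [min_eq_left (ENNReal.ofReal_le_ofReal h2),
        ← ENNReal.ofReal_mul (Real.rpow_nonneg ht.1.le _),
        ← Real.rpow_add ht.1]
      congr 1; ring
  have e2 : ∫⁻ t in Ioi a, ENNReal.ofReal (t ^ (p - 1 - q)) *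
      min (ENNReal.ofReal (t ^ q)) (ENNReal.ofReal x)
      = ENNReal.ofReal (x ^ (p/q) / (q - p)) := by
    rw [setLIntegral_congr_fun_ae measurableSet_Ioi
      (ae_of_all _ (fun t (ht : a < t) => ?_) :
        ∀ᵐ t ∂volume, t ∈ Ioi a →
          ENNReal.ofReal (t ^ (p - 1 - q)) *
            min (ENNReal.ofReal (t ^ q)) (ENNReal.ofReal x)
          = ENNReal.ofReal (t ^ (p - 1 - q) * x))]
    · rw [← ofReal_integral_eq_lintegral_ofReal
        ((integrableOn_Ioi_rpow_of_lt (by linarith : p - 1 - q < -1) ha).mul_const x)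
        ((ae_restrict_iff' measurableSet_Ioi).2 (ae_of_all _
          fun t ht => mul_nonneg (Real.rpow_nonneg (ha.trans ht).le _) hx))]
      rw [MeasureTheory.integral_mul_const,
        integral_Ioi_rpow_of_lt (by linarith : p - 1 - q < -1) ha]
      congr 1
      have h3 : p - 1 - q + 1 = p - q := by ring
      rw [h3]
      have h4 : a ^ (p - q) * x = x ^ (p/q) := by
        rw [ha_def, ← Real.rpow_mul hx, ← Real.rpow_add_one hx'.ne']
        congr 1
        field_simp
        ring
      rw [div_mul_eq_mul_div, neg_mul, h4,
        show q - p = -(p - q) from by ring, div_neg, neg_div]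
    · have h2 : x ≤ t ^ q := by
        rw [← haq]; exact (Real.rpow_le_rpow ha.le ht.le hq.le)
      rw [min_eq_right (ENNReal.ofReal_le_ofReal h2),
        ← ENNReal.ofReal_mul (Real.rpow_nonneg (ha.trans ht).le _)]
  rw [e1, e2, ← ENNReal.ofReal_add (by positivity) (div_nonneg (Real.rpow_nonneg hx _) (by linarith))]
  congr 1
  have h5 : q - p ≠ 0 := by linarith
  field_simp
  ring





theorem stmt11 {Ω : Type*} [MeasurableSpace Ω] (P : Measure Ω) [IsProbabilityMeasure P]
    (Z X : Ω → ℝ) (hZ : Measurable Z) (hX : Measurable X)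
    (hZ0 : ∀ ω, 0 ≤ Z ω) (hX0 : ∀ ω, 0 ≤ X ω)
    (p q C : ℝ) (hp : 0 < p) (hpq : p < q) (hC : 0 < C)
    (h : ∀ l : ℝ, 0 < l →
      P {ω | Z ω > l} ≤ P {ω | X ω > l ^ q}
        + ENNReal.ofReal (C / l ^ q)
          * ∫⁻ ω, min (ENNReal.ofReal (l ^ q)) (ENNReal.ofReal (X ω)) ∂P) :
    ∫⁻ ω, ENNReal.ofReal (Z ω ^ p) ∂P
      ≤ ENNReal.ofReal (1 + C * q / (q - p)) * ∫⁻ ω, ENNReal.ofReal (X ω ^ (p / q)) ∂P := by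
  have hq : 0 < q := hp.trans hpq
  have hqp : 0 < q - p := by linarith
  set J := ∫⁻ ω, ENNReal.ofReal (X ω ^ (p / q)) ∂P with hJ_def
  set I : ℝ → ℝ≥0∞ := fun l =>
    ∫⁻ ω, min (ENNReal.ofReal (l ^ q)) (ENNReal.ofReal (X ω)) ∂P with hI_def
  set w : ℝ → ℝ≥0∞ := fun t => ENNReal.ofReal (p * t ^ (p - 1)) with hw_def
  -- J as a layercake integral
  have hXq : ∀ ω, (X ω ^ (1/q)) ^ p = X ω ^ (p / q) := fun ω => by
    rw [← Real.rpow_mul (hX0 ω)]; congr 1; ring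
  have hJ : J = ∫⁻ t in Ioi (0:ℝ), P {ω | t < X ω ^ (1/q)} * w t := by
    rw [hJ_def, ← layercake_rpow' P (fun ω => X ω ^ (1/q))
      (hX.pow measurable_const) (fun ω => Real.rpow_nonneg (hX0 ω) _) hp]
    exact lintegral_congr fun ω => by rw [hXq ω]
  -- set identity
  have hset : ∀ t : ℝ, 0 < t → {ω | t < X ω ^ (1/q)} = {ω | X ω > t ^ q} := by
    intro t ht
    ext ω
    simp only [mem_setOf_eq, gt_iff_lt]
    have h1 : (X ω ^ (1/q)) ^ q = X ω := by
      rw [← Real.rpow_mul (hX0 ω), one_div_mul_cancel hq.ne', Real.rpow_one]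
    rw [← Real.rpow_lt_rpow_iff ht.le (Real.rpow_nonneg (hX0 ω) _) hq, h1]
  -- first term
  have T1 : ∫⁻ t in Ioi (0:ℝ), P {ω | X ω > t ^ q} * w t = J := by
    rw [hJ]
    exact setLIntegral_congr_fun_ae measurableSet_Ioi
      (ae_of_all _ fun t ht => by rw [hset t ht])
  -- second term
  have hImeas : Measurable I := by
    have : Monotone fun s : ℝ =>
        ∫⁻ ω, min (ENNReal.ofReal s) (ENNReal.ofReal (X ω)) ∂P := fun s s' hss =>
      lintegral_mono fun ω => min_le_min (ENNReal.ofReal_le_ofReal hss) le_rfl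
    exact this.measurable.comp (measurable_id.pow measurable_const)
  have T2 : ∫⁻ t in Ioi (0:ℝ), ENNReal.ofReal (C / t ^ q) * I t * w t
      = ENNReal.ofReal (C * q / (q - p)) * J := by
    have step1 : ∫⁻ t in Ioi (0:ℝ), ENNReal.ofReal (C / t ^ q) * I t * w t
        = ∫⁻ t in Ioi (0:ℝ), ENNReal.ofReal (C * p) *
            (ENNReal.ofReal (t ^ (p - 1 - q)) * I t) := by
      refine setLIntegral_congr_fun_ae measurableSet_Ioi (ae_of_all _ fun t ht => ?_)
      have ht : (0:ℝ) < t := ht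
      have e : ENNReal.ofReal (C / t ^ q) * I t * w t
          = (ENNReal.ofReal (C / t ^ q) * w t) * I t := by ring
      rw [e, hw_def, ← ENNReal.ofReal_mul (by positivity)]
      have e2 : C / t ^ q * (p * t ^ (p - 1)) = C * p * t ^ (p - 1 - q) := by
        rw [Real.rpow_sub ht (p - 1) q]
        field_simp [(Real.rpow_pos_of_pos ht q).ne']
      rw [e2, ENNReal.ofReal_mul (by positivity), mul_assoc]
    rw [step1, lintegral_const_mul' _ _ ENNReal.ofReal_ne_top]
    have step2 : ∫⁻ t in Ioi (0:ℝ), ENNReal.ofReal (t ^ (p - 1 - q)) * I t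
        = ∫⁻ ω, ENNReal.ofReal (X ω ^ (p / q) * (q / (p * (q - p)))) ∂P := by
      have swap : ∫⁻ t in Ioi (0:ℝ), ∫⁻ ω, ENNReal.ofReal (t ^ (p - 1 - q)) *
            min (ENNReal.ofReal (t ^ q)) (ENNReal.ofReal (X ω)) ∂P
          = ∫⁻ ω, ∫⁻ t in Ioi (0:ℝ), ENNReal.ofReal (t ^ (p - 1 - q)) *
            min (ENNReal.ofReal (t ^ q)) (ENNReal.ofReal (X ω)) ∂(volume) ∂P := by
        apply lintegral_lintegral_swap
        apply Measurable.aemeasurable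
        exact ((measurable_fst.pow measurable_const).ennreal_ofReal).mul
          (((measurable_fst.pow measurable_const).ennreal_ofReal).min
            ((hX.comp measurable_snd).ennreal_ofReal))
      calc ∫⁻ t in Ioi (0:ℝ), ENNReal.ofReal (t ^ (p - 1 - q)) * I t
          = ∫⁻ t in Ioi (0:ℝ), ∫⁻ ω, ENNReal.ofReal (t ^ (p - 1 - q)) *
              min (ENNReal.ofReal (t ^ q)) (ENNReal.ofReal (X ω)) ∂P := by
            refine lintegral_congr fun t => ?_
            rw [hI_def, lintegral_const_mul' _ _ ENNReal.ofReal_ne_top]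
        _ = ∫⁻ ω, ∫⁻ t in Ioi (0:ℝ), ENNReal.ofReal (t ^ (p - 1 - q)) *
              min (ENNReal.ofReal (t ^ q)) (ENNReal.ofReal (X ω)) ∂(volume) ∂P := swap
        _ = ∫⁻ ω, ENNReal.ofReal (X ω ^ (p / q) * (q / (p * (q - p)))) ∂P := by
            exact lintegral_congr fun ω => inner_int hp hpq (hX0 ω)
    rw [step2]
    have step3 : ∫⁻ ω, ENNReal.ofReal (X ω ^ (p / q) * (q / (p * (q - p)))) ∂P
        = J * ENNReal.ofReal (q / (p * (q - p))) := by
      rw [hJ_def, ← lintegral_mul_const' _ _ ENNReal.ofReal_ne_top]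
      exact lintegral_congr fun ω => by
        rw [← ENNReal.ofReal_mul (Real.rpow_nonneg (hX0 ω) _)]
    rw [step3, ← mul_assoc, mul_comm (ENNReal.ofReal (C * p)) J, mul_assoc,
      ← ENNReal.ofReal_mul (by positivity), mul_comm J]
    congr 2
    field_simp
  -- measurability of first integrand
  have hm1 : Measurable fun t : ℝ => P {ω | X ω > t ^ q} * w t := by
    have ha : Antitone fun s : ℝ => P {ω | X ω > s} := fun s s' hss =>
      measure_mono fun ω (hω : s' < X ω) => lt_of_le_of_lt hss hω
    exact (ha.measurable.comp (measurable_id.pow measurable_const)).mul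
      ((measurable_const.mul (measurable_id.pow measurable_const)).ennreal_ofReal)
  calc ∫⁻ ω, ENNReal.ofReal (Z ω ^ p) ∂P
      = ∫⁻ t in Ioi (0:ℝ), P {ω | t < Z ω} * w t :=
        layercake_rpow' P Z hZ hZ0 hp
    _ ≤ ∫⁻ t in Ioi (0:ℝ), (P {ω | X ω > t ^ q} * w t
          + ENNReal.ofReal (C / t ^ q) * I t * w t) := by
        refine lintegral_mono_ae ?_
        rw [ae_restrict_iff' measurableSet_Ioi]
        refine ae_of_all _ fun t ht => ?_
        have ht : (0:ℝ) < t := ht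
        calc P {ω | t < Z ω} * w t
            ≤ (P {ω | X ω > t ^ q} + ENNReal.ofReal (C / t ^ q) * I t) * w t :=
              mul_le_mul_left (h t ht) _
          _ = P {ω | X ω > t ^ q} * w t + ENNReal.ofReal (C / t ^ q) * I t * w t :=
              add_mul _ _ _
    _ = (∫⁻ t in Ioi (0:ℝ), P {ω | X ω > t ^ q} * w t)
          + ∫⁻ t in Ioi (0:ℝ), ENNReal.ofReal (C / t ^ q) * I t * w t :=
        lintegral_add_left hm1 _
    _ = J + ENNReal.ofReal (C * q / (q - p)) * J := by rw [T1, T2]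
    _ = ENNReal.ofReal (1 + C * q / (q - p)) * J := by
        rw [ENNReal.ofReal_add zero_le_one (by positivity), ENNReal.ofReal_one,
          add_mul, one_mul]
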